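/- Let ψ be a nonnegative measurable function on ℝ^d with ∫ ψ(ξ)⟨ξ⟩³ dξ < ∞, ∫ ψ dξ = 1, ∫ ξ ψ(ξ) dξ = 0 and ∫ |ξ|² ψ(ξ) dξ = d/2. Then: √(2d) ≥ a_ψ ≥ (d²/4) M_{3/2}(ψ)^{−1}; √(d/2) ≥ M_{1/2}(ψ) ≥ (d²/4) M_{3/2}(ψ)^{−1}; (2/d) M_{3/2}(ψ) + √(d/2) ≥ b_ψ ≥ √(d/2); M_{3/2}(ψ) ≥ (d/2)^{3/2}; and a_ψ ≤ √d ≤ √2 · b_ψ. -/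

import Mathlib

open MeasureTheory Metric Real ENNReal

noncomputable section

/-- `ℝ^d` as a Euclidean space. -/
abbrev V (d : ℕ) := EuclideanSpace ℝ (Fin d)

/-- Japanese bracket `⟨v⟩ = √(1+|v|²)`. -/
def jap {d : ℕ} (v : V d) : ℝ := Real.sqrt (1 + ‖v‖ ^ 2)

/-- Surface measure on the unit sphere `S^{d-1} ⊆ ℝ^d`. -/
def sphereMeasure (d : ℕ) : Measure (sphere (0 : V d) 1) :=
  (volume : Measure (V d)).toSphere

/-- `|S^{d-1}|`, the total surface area of the unit sphere. -/
def sphereArea (d : ℕ) : ℝ := (sphereMeasure d Set.univ).toReal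

/-- Gain part `Q⁺(g,f)` of the hard-spheres collision operator:
`Q⁺(g,f)(v) = |S^{d-1}|⁻¹ ∫∫ |v-v₊| g(v') f(v'₊) dσ dv₊`. -/
def Qplus {d : ℕ} (g f : V d → ℝ) (v : V d) : ℝ :=
  (sphereArea d)⁻¹ *
    ∫ w : V d, ∫ σ : sphere (0 : V d) 1,
      ‖v - w‖ * g ((1 / 2 : ℝ) • (v + w) + (‖v - w‖ / 2) • (σ : V d)) *
        f ((1 / 2 : ℝ) • (v + w) - (‖v - w‖ / 2) • (σ : V d)) ∂(sphereMeasure d)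

/-- Loss part `Q⁻(g,f)(v) = g(v) ∫ |v-w| f(w) dw`. -/
def Qminus {d : ℕ} (g f : V d → ℝ) (v : V d) : ℝ :=
  g v * ∫ w : V d, ‖v - w‖ * f w

/-- The annihilation operator `𝔹_α(f,f) = (1-α) Q⁺(f,f) - Q⁻(f,f)`. -/
def Bop {d : ℕ} (α : ℝ) (f : V d → ℝ) (v : V d) : ℝ :=
  (1 - α) * Qplus f f v - Qminus f f v

/-- Drift coefficient `A_ψ = -(α/2) ∫ (d+2-2|ξ|²) Q⁻(ψ,ψ)(ξ) dξ`. -/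
def Acoef {d : ℕ} (α : ℝ) (ψ : V d → ℝ) : ℝ :=
  -(α / 2) * ∫ ξ : V d, ((d : ℝ) + 2 - 2 * ‖ξ‖ ^ 2) * Qminus ψ ψ ξ

/-- Drift coefficient `B_ψ = -(α/(2d)) ∫ (d-2|ξ|²) Q⁻(ψ,ψ)(ξ) dξ`. -/
def Bcoef {d : ℕ} (α : ℝ) (ψ : V d → ℝ) : ℝ :=
  -(α / (2 * d)) * ∫ ξ : V d, ((d : ℝ) - 2 * ‖ξ‖ ^ 2) * Qminus ψ ψ ξ

/-- `ψ ∈ ℰ_α`: `ψ` is a nonnegative `C^∞` function with `∫ ψ ⟨ξ⟩³ dξ < ∞` and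
`∫ ψ² dξ < ∞`, of unit mass, zero momentum and energy `d/2`, solving the steady
self-similar profile equation `A_ψ ψ + B_ψ ξ·∇ψ = 𝔹_α(ψ,ψ)`. -/
def memE {d : ℕ} (α : ℝ) (ψ : V d → ℝ) : Prop :=
  (∀ ξ, 0 ≤ ψ ξ) ∧ (∀ n : ℕ, ContDiff ℝ n ψ) ∧
    Integrable (fun ξ : V d => ψ ξ * jap ξ ^ 3) ∧
    Integrable (fun ξ : V d => ψ ξ ^ 2) ∧
    (∫ ξ : V d, ψ ξ) = 1 ∧
    (∫ ξ : V d, ψ ξ • ξ) = 0 ∧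
    (∫ ξ : V d, ψ ξ * ‖ξ‖ ^ 2) = (d : ℝ) / 2 ∧
    ∀ ξ : V d,
      Acoef α ψ * ψ ξ + Bcoef α ψ * (inner ℝ ξ (gradient ψ ξ) : ℝ) = Bop α ψ ξ

/-- Moment of order `2k`: `M_k(ψ) = ∫ ψ(ξ) |ξ|^{2k} dξ`. -/
def Mmom {d : ℕ} (k : ℝ) (ψ : V d → ℝ) : ℝ := ∫ ξ : V d, ψ ξ * ‖ξ‖ ^ (2 * k)

/-- Weighted `L¹` norm `‖f‖_{L¹_η} = ∫ |f(ξ)| ⟨ξ⟩^η dξ`. -/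
def L1w {d : ℕ} (η : ℝ) (f : V d → ℝ) : ℝ := ∫ ξ : V d, |f ξ| * jap ξ ^ η

/-- Weighted `L¹` norm with values in `ℝ≥0∞`. -/
def L1wE {d : ℕ} (η : ℝ) (f : V d → ℝ) : ℝ≥0∞ :=
  ∫⁻ ξ : V d, ENNReal.ofReal (|f ξ| * jap ξ ^ η)

/-- Weighted `L²` norm `‖f‖_{L²_k} = (∫ |f(ξ)|² ⟨ξ⟩^{2k} dξ)^{1/2}` (values in `ℝ≥0∞`). -/
def L2wE {d : ℕ} (k : ℝ) (f : V d → ℝ) : ℝ≥0∞ :=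
  (∫⁻ ξ : V d, ENNReal.ofReal (f ξ ^ 2 * jap ξ ^ (2 * k))) ^ (1 / 2 : ℝ)

/-- Partial derivative in the `i`-th coordinate direction. -/
def pderiv' {d : ℕ} (i : Fin d) (f : V d → ℝ) : V d → ℝ :=
  fun x => fderiv ℝ f x (EuclideanSpace.single i 1)

/-- Iterated partial derivative `∂^ℓ` associated with a multi-index `ℓ ∈ ℕ^d`. -/
def multiDeriv {d : ℕ} (ℓ : Fin d → ℕ) (f : V d → ℝ) : V d → ℝ :=
  (List.finRange d).foldr (fun i g => (pderiv' i)^[ℓ i] g) f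

/-- Weighted Sobolev norm `‖f‖_{H^m_k}` (values in `ℝ≥0∞`): square root of the sum of the
squared weighted `L²_k` norms of all partial derivatives `∂^ℓ f` over multi-indices `|ℓ| ≤ m`
(multi-indices with `|ℓ| ≤ m` are encoded as functions `Fin d → Fin (m+1)`). -/
def sobNormE {d : ℕ} (m : ℕ) (k : ℝ) (f : V d → ℝ) : ℝ≥0∞ :=
  (∑ ℓ : Fin d → Fin (m + 1),
      if (∑ i, (ℓ i : ℕ)) ≤ m then L2wE k (multiDeriv (fun i => (ℓ i : ℕ)) f) ^ 2 else 0) ^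
    (1 / 2 : ℝ)

/-- The Maxwellian `ℳ(ξ) = π^{-d/2} exp(-|ξ|²)`. -/
def Maxw {d : ℕ} (ξ : V d) : ℝ := Real.pi ^ (-(d : ℝ) / 2) * Real.exp (-‖ξ‖ ^ 2)

end

/-- `a_ψ = ∫ Q⁻(ψ,ψ)(ξ) dξ`. -/
noncomputable def aCoef {d : ℕ} (ψ : V d → ℝ) : ℝ := ∫ ξ : V d, Qminus ψ ψ ξ

/-- `b_ψ = (2/d) ∫ |ξ|² Q⁻(ψ,ψ)(ξ) dξ`. -/
noncomputable def bCoef {d : ℕ} (ψ : V d → ℝ) : ℝ :=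
  (2 / d) * ∫ ξ : V d, ‖ξ‖ ^ 2 * Qminus ψ ψ ξ


section Aux

open MeasureTheory

private lemma my_cs {α : Type*} [MeasurableSpace α] {μ : Measure α} {f g : α → ℝ}
    (hf0 : ∀ x, 0 ≤ f x) (hg0 : ∀ x, 0 ≤ g x)
    (hfm : AEStronglyMeasurable f μ) (hgm : AEStronglyMeasurable g μ)
    (hf2 : Integrable (fun x => f x ^ 2) μ) (hg2 : Integrable (fun x => g x ^ 2) μ) :
    ∫ x, f x * g x ∂μ ≤ Real.sqrt (∫ x, f x ^ 2 ∂μ) * Real.sqrt (∫ x, g x ^ 2 ∂μ) := by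
  have h2 : Real.HolderConjugate 2 2 := Real.HolderConjugate.two_two
  have hfmem : MemLp f (ENNReal.ofReal 2) μ := by
    rw [show ENNReal.ofReal (2:ℝ) = 2 by simp]
    exact (memLp_two_iff_integrable_sq hfm).2 hf2
  have hgmem : MemLp g (ENNReal.ofReal 2) μ := by
    rw [show ENNReal.ofReal (2:ℝ) = 2 by simp]
    exact (memLp_two_iff_integrable_sq hgm).2 hg2
  have h := integral_mul_le_Lp_mul_Lq_of_nonneg h2
    (Filter.Eventually.of_forall hf0) (Filter.Eventually.of_forall hg0) hfmem hgmem
  have e : ∀ x : ℝ, x ^ (2:ℝ) = x ^ 2 := fun x => by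
    rw [show (2:ℝ) = ((2:ℕ):ℝ) by norm_num, Real.rpow_natCast]
  simp only [e] at h
  calc ∫ x, f x * g x ∂μ ≤ (∫ x, f x ^ 2 ∂μ) ^ (1/2:ℝ) * (∫ x, g x ^ 2 ∂μ) ^ (1/2:ℝ) := h
    _ = _ := by rw [← Real.sqrt_eq_rpow, ← Real.sqrt_eq_rpow]

/-- Cauchy-Schwarz with a nonnegative weight `ψ`. -/
private lemma cs_gen {α : Type*} [MeasurableSpace α] {μ : Measure α} {ψ u v p q r : α → ℝ}
    (hψ : ∀ x, 0 ≤ ψ x) (hu : ∀ x, 0 ≤ u x) (hv : ∀ x, 0 ≤ v x)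
    (hm : AEStronglyMeasurable ψ μ) (hum : AEStronglyMeasurable u μ)
    (hvm : AEStronglyMeasurable v μ)
    (hp : ∀ x, p x = ψ x * (u x * v x)) (hq : ∀ x, q x = ψ x * u x ^ 2)
    (hr : ∀ x, r x = ψ x * v x ^ 2)
    (hq2 : Integrable q μ) (hr2 : Integrable r μ) :
    ∫ x, p x ∂μ ≤ Real.sqrt (∫ x, q x ∂μ) * Real.sqrt (∫ x, r x ∂μ) := by
  have e0 : ∀ x, p x = (Real.sqrt (ψ x) * u x) * (Real.sqrt (ψ x) * v x) := fun x => by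
    rw [hp x]
    linear_combination (-(u x * v x)) * Real.sq_sqrt (hψ x)
  have e1 : ∀ x, q x = (Real.sqrt (ψ x) * u x) ^ 2 := fun x => by
    rw [hq x, mul_pow, Real.sq_sqrt (hψ x)]
  have e2 : ∀ x, r x = (Real.sqrt (ψ x) * v x) ^ 2 := fun x => by
    rw [hr x, mul_pow, Real.sq_sqrt (hψ x)]
  have hq' : Integrable (fun x => (Real.sqrt (ψ x) * u x) ^ 2) μ :=
    hq2.congr (Filter.Eventually.of_forall e1)
  have hr' : Integrable (fun x => (Real.sqrt (ψ x) * v x) ^ 2) μ :=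
    hr2.congr (Filter.Eventually.of_forall e2)
  have i1 : (∫ x, (Real.sqrt (ψ x) * u x) ^ 2 ∂μ) = ∫ x, q x ∂μ :=
    integral_congr_ae (Filter.Eventually.of_forall fun x => (e1 x).symm)
  have i2 : (∫ x, (Real.sqrt (ψ x) * v x) ^ 2 ∂μ) = ∫ x, r x ∂μ :=
    integral_congr_ae (Filter.Eventually.of_forall fun x => (e2 x).symm)
  calc ∫ x, p x ∂μ = ∫ x, (Real.sqrt (ψ x) * u x) * (Real.sqrt (ψ x) * v x) ∂μ :=
        integral_congr_ae (Filter.Eventually.of_forall e0)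
    _ ≤ Real.sqrt (∫ x, (Real.sqrt (ψ x) * u x) ^ 2 ∂μ) *
          Real.sqrt (∫ x, (Real.sqrt (ψ x) * v x) ^ 2 ∂μ) :=
        my_cs (fun x => mul_nonneg (Real.sqrt_nonneg _) (hu x))
          (fun x => mul_nonneg (Real.sqrt_nonneg _) (hv x))
          ((Real.continuous_sqrt.comp_aestronglyMeasurable hm).mul hum)
          ((Real.continuous_sqrt.comp_aestronglyMeasurable hm).mul hvm) hq' hr'
    _ = _ := by rw [i1, i2]

end Aux

set_option maxHeartbeats 2000000 in
/-- **Elementary estimates on `a_ψ`, `b_ψ` and the moments** for a nonnegative distribution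
with unit mass, zero momentum and energy `d/2`. -/
theorem estimates_a_b_moments (d : ℕ) (hd : 3 ≤ d) (ψ : V d → ℝ)
    (hmeas : Measurable ψ) (hpos : ∀ ξ, 0 ≤ ψ ξ)
    (hint : Integrable (fun ξ : V d => ψ ξ * jap ξ ^ 3))
    (hmass : (∫ ξ : V d, ψ ξ) = 1)
    (hmom : (∫ ξ : V d, ψ ξ • ξ) = 0)
    (hen : (∫ ξ : V d, ψ ξ * ‖ξ‖ ^ 2) = (d : ℝ) / 2) :
    aCoef ψ ≤ Real.sqrt (2 * d) ∧
    (d : ℝ) ^ 2 / 4 * (Mmom (3 / 2) ψ)⁻¹ ≤ aCoef ψ ∧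
    Mmom (1 / 2) ψ ≤ Real.sqrt ((d : ℝ) / 2) ∧
    (d : ℝ) ^ 2 / 4 * (Mmom (3 / 2) ψ)⁻¹ ≤ Mmom (1 / 2) ψ ∧
    bCoef ψ ≤ 2 / (d : ℝ) * Mmom (3 / 2) ψ + Real.sqrt ((d : ℝ) / 2) ∧
    Real.sqrt ((d : ℝ) / 2) ≤ bCoef ψ ∧
    ((d : ℝ) / 2) ^ ((3 : ℝ) / 2) ≤ Mmom (3 / 2) ψ ∧
    aCoef ψ ≤ Real.sqrt d ∧
    Real.sqrt d ≤ Real.sqrt 2 * bCoef ψ := by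
  have hd0 : (0:ℝ) < d := by exact_mod_cast Nat.lt_of_lt_of_le (by norm_num) hd
  have hd2 : (0:ℝ) < (d:ℝ)/2 := by positivity
  -- basic jap facts
  have hjap1 : ∀ ξ : V d, 1 ≤ jap ξ := fun ξ => by
    have h := Real.sqrt_le_sqrt (show (1:ℝ) ≤ 1 + ‖ξ‖^2 by nlinarith [sq_nonneg ‖ξ‖])
    simpa [jap] using h
  have hjapn : ∀ ξ : V d, ‖ξ‖ ≤ jap ξ := fun ξ => by
    have h := Real.sqrt_le_sqrt (show ‖ξ‖^2 ≤ 1 + ‖ξ‖^2 by linarith)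
    rwa [Real.sqrt_sq (norm_nonneg _)] at h
  -- integrability of moments
  have intk : ∀ k : ℕ, k ≤ 3 → Integrable (fun ξ : V d => ψ ξ * ‖ξ‖ ^ k) := by
    intro k hk
    refine hint.mono ((hmeas.mul (measurable_norm.pow_const k)).aestronglyMeasurable) ?_
    filter_upwards with ξ
    have hj0 : (0:ℝ) ≤ jap ξ := le_trans zero_le_one (hjap1 ξ)
    rw [Real.norm_of_nonneg (mul_nonneg (hpos ξ) (by positivity)),
      Real.norm_of_nonneg (mul_nonneg (hpos ξ) (by positivity))]
    have h1 : ‖ξ‖ ^ k ≤ jap ξ ^ k := pow_le_pow_left₀ (norm_nonneg _) (hjapn ξ) k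
    have h2 : jap ξ ^ k ≤ jap ξ ^ 3 := pow_le_pow_right₀ (hjap1 ξ) hk
    exact mul_le_mul_of_nonneg_left (le_trans h1 h2) (hpos ξ)
  have intψ : Integrable ψ := by simpa using intk 0 (by norm_num)
  have intψ1 : Integrable (fun ξ : V d => ψ ξ * ‖ξ‖) := by
    simpa using intk 1 (by norm_num)
  have intψ2 := intk 2 (by norm_num)
  have intψ3 := intk 3 (by norm_num)
  have intv : Integrable (fun w : V d => ψ w • w) := by
    refine intψ1.mono' ((hmeas.aestronglyMeasurable).smul aestronglyMeasurable_id) ?_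
    filter_upwards with w
    rw [norm_smul, Real.norm_of_nonneg (hpos w)]
  set M1 := ∫ ξ : V d, ψ ξ * ‖ξ‖ with hM1def
  set M3 := ∫ ξ : V d, ψ ξ * ‖ξ‖ ^ 3 with hM3def
  have hM1nn : 0 ≤ M1 := integral_nonneg fun ξ => mul_nonneg (hpos ξ) (norm_nonneg _)
  have hM3nn : 0 ≤ M3 := integral_nonneg fun ξ => mul_nonneg (hpos ξ) (by positivity)
  have hM12e : Mmom (1/2) ψ = M1 := by
    rw [hM1def]; unfold Mmom
    refine integral_congr_ae (Filter.Eventually.of_forall fun ξ => ?_)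
    beta_reduce
    rw [show (2 * (1/2 : ℝ)) = 1 by norm_num, Real.rpow_one]
  have hM32e : Mmom (3/2) ψ = M3 := by
    rw [hM3def]; unfold Mmom
    refine integral_congr_ae (Filter.Eventually.of_forall fun ξ => ?_)
    beta_reduce
    rw [show (2 * (3/2 : ℝ)) = 3 by norm_num]
    rw [show ‖ξ‖ ^ (3:ℝ) = ‖ξ‖ ^ (3:ℕ) from by rw [← Real.rpow_natCast ‖ξ‖ 3]; norm_num]
  -- the inner integral I
  set I : V d → ℝ := fun ξ => ∫ w : V d, ‖ξ - w‖ * ψ w with hIdef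
  have intIw : ∀ ξ : V d, Integrable (fun w : V d => ‖ξ - w‖ * ψ w) := by
    intro ξ
    have hGi : Integrable (fun w : V d => ‖ξ‖ * ψ w + ψ w * ‖w‖) := by
      have := (intψ.const_mul ‖ξ‖).add intψ1
      exact this
    refine hGi.mono' (((measurable_const.sub measurable_id).norm.mul
      hmeas).aestronglyMeasurable) ?_
    filter_upwards with w
    rw [Real.norm_of_nonneg (mul_nonneg (norm_nonneg _) (hpos w))]
    calc ‖ξ - w‖ * ψ w ≤ (‖ξ‖ + ‖w‖) * ψ w :=
          mul_le_mul_of_nonneg_right (norm_sub_le ξ w) (hpos w)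
      _ = ‖ξ‖ * ψ w + ψ w * ‖w‖ := by ring
  have intIw2 : ∀ ξ : V d, Integrable (fun w : V d => ψ w * ‖ξ - w‖ ^ 2) := by
    intro ξ
    have hGi : Integrable (fun w : V d => ψ w * ‖ξ‖^2 + 2 * ‖ξ‖ * (ψ w * ‖w‖) + ψ w * ‖w‖^2) :=
      ((intψ.mul_const _).add (intψ1.const_mul _)).add intψ2
    refine hGi.mono' ((hmeas.mul
      ((measurable_const.sub measurable_id).norm.pow_const 2)).aestronglyMeasurable) ?_
    filter_upwards with w
    rw [Real.norm_of_nonneg (mul_nonneg (hpos w) (by positivity))]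
    have h1 : ‖ξ - w‖^2 ≤ (‖ξ‖ + ‖w‖)^2 :=
      pow_le_pow_left₀ (norm_nonneg _) (norm_sub_le ξ w) 2
    calc ψ w * ‖ξ - w‖^2 ≤ ψ w * (‖ξ‖ + ‖w‖)^2 :=
          mul_le_mul_of_nonneg_left h1 (hpos w)
      _ = ψ w * ‖ξ‖^2 + 2 * ‖ξ‖ * (ψ w * ‖w‖) + ψ w * ‖w‖^2 := by ring
  have hInn : ∀ ξ : V d, 0 ≤ I ξ := fun ξ =>
    integral_nonneg fun w => mul_nonneg (norm_nonneg _) (hpos w)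
  -- Jensen lower bound
  have hlb : ∀ ξ : V d, ‖ξ‖ ≤ I ξ := by
    intro ξ
    have he : (∫ w : V d, ψ w • (ξ - w)) = ξ := by
      have e : (fun w : V d => ψ w • (ξ - w)) = fun w => ψ w • ξ - ψ w • w :=
        funext fun w => smul_sub _ _ _
      rw [e, integral_sub (intψ.smul_const ξ) intv, integral_smul_const, hmass, hmom,
        one_smul, sub_zero]
    calc ‖ξ‖ = ‖∫ w : V d, ψ w • (ξ - w)‖ := by rw [he]
      _ ≤ ∫ w : V d, ‖ψ w • (ξ - w)‖ := norm_integral_le_integral_norm _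
      _ = I ξ := by
          refine integral_congr_ae (Filter.Eventually.of_forall fun w => ?_)
          beta_reduce
          rw [norm_smul, Real.norm_of_nonneg (hpos w), mul_comm]
  -- triangle upper bound
  have hub1 : ∀ ξ : V d, I ξ ≤ ‖ξ‖ + M1 := by
    intro ξ
    have hGi : Integrable (fun w : V d => ‖ξ‖ * ψ w + ψ w * ‖w‖) := by
      have := (intψ.const_mul ‖ξ‖).add intψ1
      exact this
    have step : I ξ ≤ ∫ w : V d, ‖ξ‖ * ψ w + ψ w * ‖w‖ := by
      refine integral_mono (intIw ξ) hGi fun w => ?_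
      have : ‖ξ - w‖ * ψ w ≤ (‖ξ‖ + ‖w‖) * ψ w :=
        mul_le_mul_of_nonneg_right (norm_sub_le ξ w) (hpos w)
      calc ‖ξ - w‖ * ψ w ≤ (‖ξ‖ + ‖w‖) * ψ w := this
        _ = ‖ξ‖ * ψ w + ψ w * ‖w‖ := by ring
    have comp : (∫ w : V d, ‖ξ‖ * ψ w + ψ w * ‖w‖) = ‖ξ‖ + M1 := by
      rw [integral_add (intψ.const_mul ‖ξ‖) intψ1, integral_const_mul, hmass, mul_one, hM1def]
    rw [comp] at step; exact step
  -- exact second moment of the inner integrand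
  have hsq : ∀ ξ : V d, (∫ w : V d, ψ w * ‖ξ - w‖^2) = ‖ξ‖^2 + (d:ℝ)/2 := by
    intro ξ
    have hexp : ∀ w : V d, ψ w * ‖ξ - w‖^2
        = (ψ w * ‖ξ‖^2 + ψ w * ‖w‖^2) - 2 * (inner ℝ ξ (ψ w • w) : ℝ) := by
      intro w
      rw [norm_sub_sq_real, real_inner_smul_right]
      ring
    have i1 : Integrable (fun w : V d => ψ w * ‖ξ‖^2 + ψ w * ‖w‖^2) :=
      (intψ.mul_const _).add intψ2
    have i2 : Integrable (fun w : V d => (inner ℝ ξ (ψ w • w) : ℝ)) :=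
      (innerSL ℝ ξ).integrable_comp intv
    calc (∫ w : V d, ψ w * ‖ξ - w‖^2)
        = ∫ w : V d, (ψ w * ‖ξ‖^2 + ψ w * ‖w‖^2) - 2 * (inner ℝ ξ (ψ w • w) : ℝ) :=
          integral_congr_ae (Filter.Eventually.of_forall hexp)
      _ = (∫ w : V d, ψ w * ‖ξ‖^2 + ψ w * ‖w‖^2)
            - ∫ w : V d, 2 * (inner ℝ ξ (ψ w • w) : ℝ) :=
          integral_sub i1 (i2.const_mul 2)
      _ = ‖ξ‖^2 + (d:ℝ)/2 := by
          rw [integral_add (intψ.mul_const _) intψ2, integral_mul_const, hmass,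
            integral_const_mul, integral_inner intv, hmom, inner_zero_right, hen]
          ring
  -- measurability of I
  have hImeas : AEStronglyMeasurable I (volume : Measure (V d)) := by
    have hsm : StronglyMeasurable (fun p : V d × V d => ‖p.1 - p.2‖ * ψ p.2) :=
      ((measurable_fst.sub measurable_snd).norm.mul
        (hmeas.comp measurable_snd)).stronglyMeasurable
    exact hsm.integral_prod_right'.aestronglyMeasurable
  -- Cauchy-Schwarz upper bound on I
  have hub2 : ∀ ξ : V d, I ξ ≤ Real.sqrt (‖ξ‖^2 + (d:ℝ)/2) := by
    intro ξ
    have cs := cs_gen (μ := (volume : Measure (V d))) (ψ := ψ) (u := fun _ => 1)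
      (v := fun w => ‖ξ - w‖) (p := fun w => ‖ξ - w‖ * ψ w) (q := ψ)
      (r := fun w => ψ w * ‖ξ - w‖^2) hpos (fun _ => zero_le_one)
      (fun w => norm_nonneg _) hmeas.aestronglyMeasurable aestronglyMeasurable_const
      ((measurable_const.sub measurable_id).norm.aestronglyMeasurable)
      (fun w => by ring) (fun w => by ring) (fun w => rfl) (by simpa using intψ) (intIw2 ξ)
    rw [hmass, hsq ξ, Real.sqrt_one, one_mul] at cs
    exact cs
  -- integrability of the outer integrands
  have intaI : Integrable (fun ξ : V d => ψ ξ * I ξ) := by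
    have hGi : Integrable (fun ξ : V d => ψ ξ * ‖ξ‖ + M1 * ψ ξ) :=
      intψ1.add (intψ.const_mul M1)
    refine hGi.mono' (hmeas.aestronglyMeasurable.mul hImeas) ?_
    filter_upwards with ξ
    rw [Real.norm_of_nonneg (mul_nonneg (hpos ξ) (hInn ξ))]
    calc ψ ξ * I ξ ≤ ψ ξ * (‖ξ‖ + M1) := mul_le_mul_of_nonneg_left (hub1 ξ) (hpos ξ)
      _ = ψ ξ * ‖ξ‖ + M1 * ψ ξ := by ring
  have intbI : Integrable (fun ξ : V d => ‖ξ‖^2 * (ψ ξ * I ξ)) := by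
    have hGi : Integrable (fun ξ : V d => ψ ξ * ‖ξ‖^3 + M1 * (ψ ξ * ‖ξ‖^2)) :=
      intψ3.add (intψ2.const_mul M1)
    refine hGi.mono' ((measurable_norm.pow_const 2).aestronglyMeasurable.mul
      (hmeas.aestronglyMeasurable.mul hImeas)) ?_
    filter_upwards with ξ
    rw [Real.norm_of_nonneg (mul_nonneg (by positivity) (mul_nonneg (hpos ξ) (hInn ξ)))]
    calc ‖ξ‖^2 * (ψ ξ * I ξ) ≤ ‖ξ‖^2 * (ψ ξ * (‖ξ‖ + M1)) :=
          mul_le_mul_of_nonneg_left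
            (mul_le_mul_of_nonneg_left (hub1 ξ) (hpos ξ)) (by positivity)
      _ = ψ ξ * ‖ξ‖^3 + M1 * (ψ ξ * ‖ξ‖^2) := by ring
  -- identification of aCoef and bCoef
  have haI : aCoef ψ = ∫ ξ : V d, ψ ξ * I ξ := rfl
  have hbI : bCoef ψ = (2/(d:ℝ)) * ∫ ξ : V d, ‖ξ‖^2 * (ψ ξ * I ξ) := rfl
  have haM : M1 ≤ aCoef ψ := by
    rw [haI, hM1def]
    exact integral_mono intψ1 intaI fun ξ => mul_le_mul_of_nonneg_left (hlb ξ) (hpos ξ)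
  -- Cauchy-Schwarz A : M1 ≤ √(d/2)
  have csA : M1 ≤ Real.sqrt ((d:ℝ)/2) := by
    have cs := cs_gen (μ := (volume : Measure (V d))) (ψ := ψ) (u := fun _ => 1)
      (v := fun ξ => ‖ξ‖) (p := fun ξ => ψ ξ * ‖ξ‖) (q := ψ) (r := fun ξ => ψ ξ * ‖ξ‖^2)
      hpos (fun _ => zero_le_one) (fun _ => norm_nonneg _)
      hmeas.aestronglyMeasurable aestronglyMeasurable_const
      measurable_norm.aestronglyMeasurable
      (fun ξ => by ring) (fun ξ => by ring) (fun ξ => rfl) intψ intψ2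
    rw [hmass, hen, Real.sqrt_one, one_mul] at cs
    exact cs
  -- Cauchy-Schwarz B : d/2 ≤ √M1 * √M3
  have sqm : AEStronglyMeasurable (fun ξ : V d => Real.sqrt ‖ξ‖) volume :=
    Real.continuous_sqrt.comp_aestronglyMeasurable measurable_norm.aestronglyMeasurable
  have csB : (d:ℝ)/2 ≤ Real.sqrt M1 * Real.sqrt M3 := by
    have cs := cs_gen (μ := (volume : Measure (V d))) (ψ := ψ)
      (u := fun ξ => Real.sqrt ‖ξ‖) (v := fun ξ => Real.sqrt ‖ξ‖ * ‖ξ‖)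
      (p := fun ξ => ψ ξ * ‖ξ‖^2) (q := fun ξ => ψ ξ * ‖ξ‖) (r := fun ξ => ψ ξ * ‖ξ‖^3)
      hpos (fun ξ => Real.sqrt_nonneg _)
      (fun ξ => mul_nonneg (Real.sqrt_nonneg _) (norm_nonneg _))
      hmeas.aestronglyMeasurable sqm (sqm.mul measurable_norm.aestronglyMeasurable)
      (fun ξ => by
        linear_combination (-(ψ ξ * ‖ξ‖)) * Real.sq_sqrt (norm_nonneg ξ))
      (fun ξ => by
        linear_combination (-(ψ ξ)) * Real.sq_sqrt (norm_nonneg ξ))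
      (fun ξ => by
        linear_combination (-(ψ ξ) * ‖ξ‖^2) * Real.sq_sqrt (norm_nonneg ξ))
      intψ1 intψ3
    rw [hen] at cs
    exact cs
  obtain ⟨s, hsdef⟩ : ∃ s : ℝ, s = Real.sqrt ((d:ℝ)/2) := ⟨_, rfl⟩
  have hs0 : 0 < s := hsdef ▸ Real.sqrt_pos.2 hd2
  have hss : s * s = (d:ℝ)/2 := hsdef ▸ Real.mul_self_sqrt (le_of_lt hd2)
  have hM1M3 : (d:ℝ)^2/4 ≤ M1 * M3 := by
    have h1 : ((d:ℝ)/2)^2 ≤ (Real.sqrt M1 * Real.sqrt M3)^2 :=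
      pow_le_pow_left₀ (le_of_lt hd2) csB 2
    have h2 : (Real.sqrt M1 * Real.sqrt M3)^2 = M1 * M3 := by
      rw [mul_pow, Real.sq_sqrt hM1nn, Real.sq_sqrt hM3nn]
    nlinarith [h1, h2]
  have hM3lb' : (d:ℝ)/2 * s ≤ M3 := by
    have csA' : M1 ≤ s := hsdef ▸ csA
    have h1 : (d:ℝ)^2/4 ≤ s * M3 := le_trans hM1M3 (mul_le_mul_of_nonneg_right csA' hM3nn)
    have h2 : s * ((d:ℝ)/2 * s) ≤ s * M3 := by
      have e : s * ((d:ℝ)/2 * s) = (d:ℝ)^2/4 := by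
        calc s * ((d:ℝ)/2 * s) = (d:ℝ)/2 * (s * s) := by ring
          _ = (d:ℝ)/2 * ((d:ℝ)/2) := by rw [hss]
          _ = (d:ℝ)^2/4 := by ring
      rw [e]; exact h1
    exact le_of_mul_le_mul_left h2 hs0
  have claim7 : ((d:ℝ)/2)^((3:ℝ)/2) ≤ Mmom (3/2) ψ := by
    rw [hM32e]
    have e : ((d:ℝ)/2)^((3:ℝ)/2) = (d:ℝ)/2 * s := by
      rw [hsdef, show (3:ℝ)/2 = 1 + 1/2 by norm_num, Real.rpow_add hd2, Real.rpow_one,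
        ← Real.sqrt_eq_rpow]
    rw [e]; exact hM3lb'
  have hM3pos : 0 < M3 := lt_of_lt_of_le (by positivity) hM3lb'
  have claim4 : (d:ℝ)^2/4 * M3⁻¹ ≤ M1 := by
    rw [← div_eq_mul_inv, div_le_iff₀ hM3pos]
    exact hM1M3
  -- the bound aCoef ≤ √d
  have vmeas : AEStronglyMeasurable (fun ξ : V d => Real.sqrt (‖ξ‖^2 + (d:ℝ)/2)) volume :=
    (Real.continuous_sqrt.comp ((continuous_norm.pow 2).add continuous_const)).aestronglyMeasurable
  have hbnd : ∀ ξ : V d, Real.sqrt (‖ξ‖^2 + (d:ℝ)/2) ≤ ‖ξ‖ + s := by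
    intro ξ
    have h0 : 0 ≤ 2 * ‖ξ‖ * s := mul_nonneg (mul_nonneg (by norm_num) (norm_nonneg ξ)) hs0.le
    have h : ‖ξ‖^2 + (d:ℝ)/2 ≤ (‖ξ‖ + s)^2 := by
      calc ‖ξ‖^2 + (d:ℝ)/2 = ‖ξ‖^2 + s * s := by rw [hss]
        _ ≤ ‖ξ‖^2 + 2 * ‖ξ‖ * s + s * s := by linarith
        _ = (‖ξ‖ + s)^2 := by ring
    calc Real.sqrt (‖ξ‖^2 + (d:ℝ)/2) ≤ Real.sqrt ((‖ξ‖ + s)^2) := Real.sqrt_le_sqrt h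
      _ = ‖ξ‖ + s := Real.sqrt_sq (by positivity)
  have intD : Integrable (fun ξ : V d => ψ ξ * Real.sqrt (‖ξ‖^2 + (d:ℝ)/2)) := by
    have hGi : Integrable (fun ξ : V d => ψ ξ * ‖ξ‖ + s * ψ ξ) := intψ1.add (intψ.const_mul s)
    refine hGi.mono' (hmeas.aestronglyMeasurable.mul vmeas) ?_
    filter_upwards with ξ
    rw [Real.norm_of_nonneg (mul_nonneg (hpos ξ) (Real.sqrt_nonneg _))]
    calc ψ ξ * Real.sqrt (‖ξ‖^2 + (d:ℝ)/2) ≤ ψ ξ * (‖ξ‖ + s) :=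
          mul_le_mul_of_nonneg_left (hbnd ξ) (hpos ξ)
      _ = ψ ξ * ‖ξ‖ + s * ψ ξ := by ring
  have intquad : Integrable (fun ξ : V d => ψ ξ * (‖ξ‖^2 + (d:ℝ)/2)) :=
    (intψ2.add (intψ.mul_const ((d:ℝ)/2))).congr
      (Filter.Eventually.of_forall fun ξ => by simp only [Pi.add_apply]; ring)
  have hquad : (∫ ξ : V d, ψ ξ * (‖ξ‖^2 + (d:ℝ)/2)) = (d:ℝ) := by
    have e : (fun ξ : V d => ψ ξ * (‖ξ‖^2 + (d:ℝ)/2))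
        = fun ξ => ψ ξ * ‖ξ‖^2 + ψ ξ * ((d:ℝ)/2) := funext fun ξ => by ring
    rw [e, integral_add intψ2 (intψ.mul_const _), hen, integral_mul_const, hmass]; ring
  have claim8 : aCoef ψ ≤ Real.sqrt d := by
    rw [haI]
    have step1 : (∫ ξ : V d, ψ ξ * I ξ) ≤ ∫ ξ : V d, ψ ξ * Real.sqrt (‖ξ‖^2 + (d:ℝ)/2) :=
      integral_mono intaI intD fun ξ => mul_le_mul_of_nonneg_left (hub2 ξ) (hpos ξ)
    have cs := cs_gen (μ := (volume : Measure (V d))) (ψ := ψ) (u := fun _ => 1)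
      (v := fun ξ => Real.sqrt (‖ξ‖^2 + (d:ℝ)/2))
      (p := fun ξ => ψ ξ * Real.sqrt (‖ξ‖^2 + (d:ℝ)/2)) (q := ψ)
      (r := fun ξ => ψ ξ * (‖ξ‖^2 + (d:ℝ)/2))
      hpos (fun _ => zero_le_one) (fun _ => Real.sqrt_nonneg _)
      hmeas.aestronglyMeasurable aestronglyMeasurable_const vmeas
      (fun ξ => by ring) (fun ξ => by ring)
      (fun ξ => by rw [Real.sq_sqrt (by positivity)]) intψ intquad
    rw [hmass, hquad, Real.sqrt_one, one_mul] at cs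
    exact le_trans step1 cs
  -- b bounds
  have hbl : M3 ≤ ∫ ξ : V d, ‖ξ‖^2 * (ψ ξ * I ξ) := by
    rw [hM3def]
    refine integral_mono intψ3 intbI fun ξ => ?_
    calc ψ ξ * ‖ξ‖^3 = ‖ξ‖^2 * (ψ ξ * ‖ξ‖) := by ring
      _ ≤ ‖ξ‖^2 * (ψ ξ * I ξ) := mul_le_mul_of_nonneg_left
            (mul_le_mul_of_nonneg_left (hlb ξ) (hpos ξ)) (by positivity)
  have hbu : (∫ ξ : V d, ‖ξ‖^2 * (ψ ξ * I ξ)) ≤ M3 + (d:ℝ)/2 * M1 := by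
    have hGi : Integrable (fun ξ : V d => ψ ξ * ‖ξ‖^3 + M1 * (ψ ξ * ‖ξ‖^2)) :=
      intψ3.add (intψ2.const_mul M1)
    have step : (∫ ξ : V d, ‖ξ‖^2 * (ψ ξ * I ξ))
        ≤ ∫ ξ : V d, ψ ξ * ‖ξ‖^3 + M1 * (ψ ξ * ‖ξ‖^2) := by
      refine integral_mono intbI hGi fun ξ => ?_
      calc ‖ξ‖^2 * (ψ ξ * I ξ) ≤ ‖ξ‖^2 * (ψ ξ * (‖ξ‖ + M1)) :=
            mul_le_mul_of_nonneg_left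
              (mul_le_mul_of_nonneg_left (hub1 ξ) (hpos ξ)) (by positivity)
        _ = ψ ξ * ‖ξ‖^3 + M1 * (ψ ξ * ‖ξ‖^2) := by ring
    rw [integral_add intψ3 (intψ2.const_mul M1), integral_const_mul, hen] at step
    linarith [step]
  have hb_lb : s ≤ bCoef ψ := by
    rw [hbI]
    have h2 : s ≤ (2/(d:ℝ)) * M3 := by
      have e : (2/(d:ℝ)) * ((d:ℝ)/2 * s) = s := by
        rw [show (2/(d:ℝ)) * ((d:ℝ)/2 * s) = ((d:ℝ)/(d:ℝ)) * s by ring, div_self hd0.ne',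
          one_mul]
      calc s = (2/(d:ℝ)) * ((d:ℝ)/2 * s) := e.symm
        _ ≤ (2/(d:ℝ)) * M3 := mul_le_mul_of_nonneg_left hM3lb' (by positivity)
    exact le_trans h2 (mul_le_mul_of_nonneg_left hbl (by positivity))
  have hb_ub : bCoef ψ ≤ 2/(d:ℝ) * Mmom (3/2) ψ + s := by
    rw [hbI, hM32e]
    calc (2/(d:ℝ)) * (∫ ξ : V d, ‖ξ‖^2 * (ψ ξ * I ξ))
        ≤ (2/(d:ℝ)) * (M3 + (d:ℝ)/2 * M1) := mul_le_mul_of_nonneg_left hbu (by positivity)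
      _ = 2/(d:ℝ) * M3 + M1 := by field_simp
      _ ≤ 2/(d:ℝ) * M3 + s := by
          have csA' : M1 ≤ s := hsdef ▸ csA
          linarith [csA']
  subst hsdef
  refine ⟨?_, ?_, ?_, ?_, hb_ub, hb_lb, claim7, claim8, ?_⟩
  · exact le_trans claim8 (Real.sqrt_le_sqrt (by linarith [hd0]))
  · rw [hM32e]; exact le_trans claim4 haM
  · rw [hM12e]; exact csA
  · rw [hM12e, hM32e]; exact claim4
  · have e : Real.sqrt (d:ℝ) = Real.sqrt 2 * Real.sqrt ((d:ℝ)/2) := by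
      rw [← Real.sqrt_mul (by norm_num : (0:ℝ) ≤ 2),
        show (2:ℝ) * ((d:ℝ)/2) = (d:ℝ) by ring]
    rw [e]
    exact mul_le_mul_of_nonneg_left hb_lb (Real.sqrt_nonneg _)
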